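/- Fix m ∈ ℕ and let Γ be the set of m × m matrices S over ℕ with zero diagonal whose every row sum equals the corresponding column sum. Let χ be a complex-valued function on m × m matrices over ℕ satisfying χ(S + T) = χ(S)·χ(T) for all S, T ∈ Γ and χ(Sᵀ) = conj(χ(S)) for all S ∈ Γ. Suppose a ≠ b in Fin m and χ(E_{ab} + E_{ba}) = 0. Then for every p ≥ 2 and every injective l : Fin p → Fin m with l(0) = a and l(1) = b, the cycle matrix σ = E_{l(0) l(1)} + E_{l(1) l(2)} + … + E_{l(p−1) l(0)} satisfies χ(σ) = 0. -/

import Mathlib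

/-- The semigroup `Γ` of `m × m` matrices over `ℕ` with zero diagonal whose row sums
equal the corresponding column sums. -/
def InGamma {m : ℕ} (S : Matrix (Fin m) (Fin m) ℕ) : Prop :=
  (∀ i, S i i = 0) ∧ ∀ μ, ∑ ν, S μ ν = ∑ ν, S ν μ

lemma InGamma.zero {m : ℕ} : InGamma (0 : Matrix (Fin m) (Fin m) ℕ) := by
  constructor <;> simp

lemma InGamma.add {m : ℕ} {S T : Matrix (Fin m) (Fin m) ℕ} (hS : InGamma S)
    (hT : InGamma T) : InGamma (S + T) := by
  refine ⟨fun i => ?_, fun μ => ?_⟩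
  · simp [hS.1 i, hT.1 i]
  · simp only [Matrix.add_apply, Finset.sum_add_distrib, hS.2 μ, hT.2 μ]

lemma InGamma.transpose {m : ℕ} {S : Matrix (Fin m) (Fin m) ℕ} (hS : InGamma S) :
    InGamma S.transpose :=
  ⟨fun i => hS.1 i, fun μ => (hS.2 μ).symm⟩

lemma sum_ite_and_left {m : ℕ} (c d e : Fin m) :
    (∑ x : Fin m, if c = d ∧ e = x then (1 : ℕ) else 0) = if c = d then 1 else 0 := by
  rcases eq_or_ne c d with rfl | h
  · simp [Finset.sum_ite_eq]
  · simp [h]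

lemma sum_ite_and_right {m : ℕ} (c d e : Fin m) :
    (∑ x : Fin m, if e = x ∧ c = d then (1 : ℕ) else 0) = if c = d then 1 else 0 := by
  rcases eq_or_ne c d with rfl | h
  · simp [Finset.sum_ite_eq]
  · simp [h]

lemma InGamma.edge {m : ℕ} {a b : Fin m} (hab : a ≠ b) :
    InGamma (Matrix.single a b 1 + Matrix.single b a 1) := by
  refine ⟨fun i => ?_, fun μ => ?_⟩
  · simp only [Matrix.add_apply, Matrix.single, Matrix.of_apply]
    rw [if_neg fun h => hab (h.1.trans h.2.symm), if_neg fun h => hab (h.2.trans h.1.symm)]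
    rfl
  · simp only [Matrix.add_apply, Matrix.single, Matrix.of_apply,
      Finset.sum_add_distrib, sum_ite_and_left, sum_ite_and_right]
    omega

lemma InGamma.finsetSum {m : ℕ} {ι : Type*} [DecidableEq ι] (s : Finset ι)
    (F : ι → Matrix (Fin m) (Fin m) ℕ) (hF : ∀ i ∈ s, InGamma (F i)) :
    InGamma (∑ i ∈ s, F i) := by
  induction s using Finset.induction with
  | empty => simpa using InGamma.zero
  | @insert x t hx ih =>
    rw [Finset.sum_insert hx]
    exact (hF x (Finset.mem_insert_self x t)).add
      (ih fun i hi => hF i (Finset.mem_insert_of_mem hi))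

lemma stdBasisMatrix_transpose' {m : ℕ} (a b : Fin m) :
    (Matrix.single a b (1 : ℕ)).transpose = Matrix.single b a 1 := by
  ext i j
  simp [Matrix.single, Matrix.transpose_apply, and_comm]

theorem chi_vanishes_on_cycles_through_zero_edge {m : ℕ}
    (χ : Matrix (Fin m) (Fin m) ℕ → ℂ)
    (hmul : ∀ S T : Matrix (Fin m) (Fin m) ℕ, InGamma S → InGamma T →
      χ (S + T) = χ S * χ T)
    (hstar : ∀ S : Matrix (Fin m) (Fin m) ℕ, InGamma S → χ (Matrix.transpose S) = starRingEnd ℂ (χ S))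
    (a b : Fin m) (hab : a ≠ b)
    (hzero : χ (Matrix.single a b 1 + Matrix.single b a 1) = 0)
    (p : ℕ) (hp : 2 ≤ p) (l : Fin p → Fin m) (hl : Function.Injective l)
    (hla : l ⟨0, by omega⟩ = a) (hlb : l ⟨1, by omega⟩ = b) :
    χ (∑ i : Fin p, Matrix.single (l i) (l (i + ⟨1, by omega⟩)) 1) = 0 := by
  classical
  set one : Fin p := ⟨1, by omega⟩ with hone
  haveI : NeZero p := ⟨by omega⟩
  have hone_val : (one : Fin p).val = 1 := rfl
  have hne : ∀ i : Fin p, i ≠ i + one := by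
    intro i h
    have hi := i.isLt
    rw [Fin.ext_iff, Fin.add_def, hone_val] at h
    have h2 : (i : ℕ) = ((i : ℕ) + 1) % p := h
    clear h
    rename' h2 => h
    rcases Nat.lt_or_ge (i.val + 1) p with hlt | hge
    · rw [Nat.mod_eq_of_lt hlt] at h; omega
    · have hpe : i.val + 1 = p := by omega
      rw [hpe, Nat.mod_self] at h; omega
  have hlne : ∀ i : Fin p, l i ≠ l (i + one) := fun i h => hne i (hl h)
  set σ : Matrix (Fin m) (Fin m) ℕ :=
    ∑ i : Fin p, Matrix.single (l i) (l (i + one)) 1 with hσ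
  -- σ is in Γ
  have hσΓ : InGamma σ := by
    refine ⟨fun j => ?_, fun μ => ?_⟩
    · rw [hσ]
      simp only [Matrix.sum_apply, Matrix.single, Matrix.of_apply]
      refine Finset.sum_eq_zero fun i _ => ?_
      exact if_neg fun h => hlne i (h.1.trans h.2.symm)
    · rw [hσ]
      simp only [Matrix.sum_apply, Matrix.single, Matrix.of_apply]
      rw [Finset.sum_comm, Finset.sum_comm (γ := Fin m) (s := Finset.univ)]
      simp only [sum_ite_and_left, sum_ite_and_right]
      exact Fintype.sum_bijective (fun i => i - one) (Equiv.subRight one).bijective _ _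
        (fun i => by simp)
  -- decompose σ + σᵀ into edge matrices
  set G : Fin p → Matrix (Fin m) (Fin m) ℕ := fun i =>
    Matrix.single (l i) (l (i + one)) 1 +
      Matrix.single (l (i + one)) (l i) 1 with hG
  have hGΓ : ∀ i, InGamma (G i) := fun i => InGamma.edge (hlne i)
  have hdecomp : σ + σ.transpose = ∑ i : Fin p, G i := by
    rw [hσ, Matrix.transpose_sum, ← Finset.sum_add_distrib]
    exact Finset.sum_congr rfl fun i _ => by simp only [hG, stdBasisMatrix_transpose']
  -- χ of the decomposition vanishes, since the Finset.erase term at 0 gives the zero edge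
  set z : Fin p := ⟨0, by omega⟩ with hz
  have hzeroFin : z + one = ⟨1, by omega⟩ :=
    Fin.ext (show (0 + 1) % p = 1 from Nat.mod_eq_of_lt (by omega))
  have hG0 : G z = Matrix.single a b 1 + Matrix.single b a 1 := by
    show Matrix.single (l z) (l (z + one)) 1 + Matrix.single (l (z + one)) (l z) 1 = _
    rw [hzeroFin, ← hone, hla, hlb]
  have hrestΓ : InGamma (∑ i ∈ Finset.univ.erase z, G i) :=
    InGamma.finsetSum _ _ fun i _ => hGΓ i
  have huniv : ∑ i : Fin p, G i = G z + ∑ i ∈ Finset.univ.erase z, G i :=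
    (Finset.add_sum_erase _ G (Finset.mem_univ z)).symm
  have key : χ (G z + ∑ i ∈ Finset.univ.erase z, G i)
      = χ (G z) * χ (∑ i ∈ Finset.univ.erase z, G i) := hmul _ _ (hGΓ z) hrestΓ
  have hsum0 : χ (σ + σ.transpose) = 0 := by
    rw [hdecomp, huniv, key, hG0, hzero, zero_mul]
  rw [hmul _ _ hσΓ hσΓ.transpose, hstar _ hσΓ] at hsum0
  rcases mul_eq_zero.mp hsum0 with h | h
  · exact h
  · exact star_eq_zero.mp h
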